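/- Let φ be an upper invariant, ordinally efficient, and symmetric mechanism on 4 agents and objects {a,b,c,d}. At the profile where agents 1,2,3 report a ≻ b ≻ c ≻ d and agent 4 reports a ≻ b ≻ d ≻ c, the assignment is: agents 1,2,3 each get (1/4, 1/4, 1/3, 1/6) for (a,b,c,d), and agent 4 gets (1/4, 1/4, 0, 1/2). -/

import Mathlib

open Finset

/-- A strict preference order over `n` objects, encoded as a rank function:
`P j < P j'` means object `j` is strictly preferred to object `j'`. -/
abbrev Pref (n : ℕ) := Fin n ≃ Fin n

/-- A (random) assignment: rows are agents, columns are objects. -/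
abbrev Assignment (n : ℕ) := Fin n → Fin n → ℝ

/-- Bi-stochastic matrix: nonnegative entries, all rows and columns sum to 1. -/
def BiStochastic {n : ℕ} (x : Assignment n) : Prop :=
  (∀ i j, 0 ≤ x i j) ∧ (∀ i, ∑ j, x i j = 1) ∧ (∀ j, ∑ i, x i j = 1)

/-- A mechanism maps preference profiles to assignments. -/
abbrev Mechanism (n : ℕ) := (Fin n → Pref n) → Assignment n

/-- A mechanism always outputs bi-stochastic matrices. -/
def ValidMech {n : ℕ} (φ : Mechanism n) : Prop := ∀ P, BiStochastic (φ P)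

/-- `P'` arises from `P` by swapping the consecutively ranked objects `j ≻ j'`. -/
def AdjSwap {n : ℕ} (P P' : Pref n) (j j' : Fin n) : Prop :=
  (P j' : ℕ) = (P j : ℕ) + 1 ∧ P' = (Equiv.swap j j').trans P

/-- Upper invariance: a swap of consecutive `j ≻ j'` leaves the swapping agent's
probabilities for objects strictly preferred to `j` unchanged. -/
def UpperInvariant {n : ℕ} (φ : Mechanism n) : Prop :=
  ∀ (P : Fin n → Pref n) (i j j' : Fin n) (P' : Pref n),
    AdjSwap (P i) P' j j' →
    ∀ k, P i k < P i j → φ (Function.update P i P') i k = φ P i k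

/-- Lower invariance: a swap of consecutive `j ≻ j'` leaves the swapping agent's
probabilities for objects ranked strictly below `j'` unchanged. -/
def LowerInvariant {n : ℕ} (φ : Mechanism n) : Prop :=
  ∀ (P : Fin n → Pref n) (i j j' : Fin n) (P' : Pref n),
    AdjSwap (P i) P' j j' →
    ∀ k, P i j' < P i k → φ (Function.update P i P') i k = φ P i k

/-- Swap monotonicity: after a swap of consecutive `j ≻ j'`, either the agent's
assignment vector is unchanged, or her probability for `j` strictly decreases and
her probability for `j'` strictly increases. -/
def SwapMonotonic {n : ℕ} (φ : Mechanism n) : Prop :=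
  ∀ (P : Fin n → Pref n) (i j j' : Fin n) (P' : Pref n),
    AdjSwap (P i) P' j j' →
    φ (Function.update P i P') i = φ P i ∨
      (φ (Function.update P i P') i j < φ P i j ∧
       φ P i j' < φ (Function.update P i P') i j')

/-- `y` first order-stochastically dominates `x` at preference order `P`. -/
def FOSD {n : ℕ} (P : Pref n) (y x : Fin n → ℝ) : Prop :=
  ∀ j, ∑ k ∈ univ.filter (fun k => P k ≤ P j), x k ≤
       ∑ k ∈ univ.filter (fun k => P k ≤ P j), y k

/-- `y` strictly ordinally dominates `x` at profile `P`. -/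
def StrictDom {n : ℕ} (P : Fin n → Pref n) (y x : Assignment n) : Prop :=
  (∀ i, FOSD (P i) (y i) (x i)) ∧
  ∃ i j, ∑ k ∈ univ.filter (fun k => P i k ≤ P i j), x i k <
         ∑ k ∈ univ.filter (fun k => P i k ≤ P i j), y i k

/-- `x` is ordinally efficient at profile `P`. -/
def OrdEffAt {n : ℕ} (P : Fin n → Pref n) (x : Assignment n) : Prop :=
  ¬ ∃ y, BiStochastic y ∧ StrictDom P y x

/-- An ordinally efficient mechanism. -/
def OrdEff {n : ℕ} (φ : Mechanism n) : Prop := ∀ P, OrdEffAt P (φ P)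

/-- Symmetry (equal treatment of equals). -/
def SymmetricMech {n : ℕ} (φ : Mechanism n) : Prop :=
  ∀ P (i i' : Fin n), P i = P i' → φ P i = φ P i'

/-- Anonymity: exchanging two agents' reports exchanges their assignment vectors. -/
def Anonymous {n : ℕ} (φ : Mechanism n) : Prop :=
  ∀ P (i i' : Fin n), φ P i = φ (fun k => P (Equiv.swap i i' k)) i'

/-- Neutrality: relabeling objects via `π` relabels the assignment columns. -/
def Neutral {n : ℕ} (φ : Mechanism n) : Prop :=
  ∀ P (π : Equiv.Perm (Fin n)) (i j : Fin n),
    φ (fun k => π.symm.trans (P k)) i (π j) = φ P i j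

/-- Non-bossiness. -/
def NonBossy {n : ℕ} (φ : Mechanism n) : Prop :=
  ∀ (P : Fin n → Pref n) (i : Fin n) (P' : Pref n),
    φ (Function.update P i P') i = φ P i →
    φ (Function.update P i P') = φ P

/-- Objects: `a = 0`, `b = 1`, `c = 2`, `d = 3`. Preference orders as rank functions. -/
noncomputable def pABCD : Pref 4 := Equiv.ofBijective ![0, 1, 2, 3] (by decide)
noncomputable def pABDC : Pref 4 := Equiv.ofBijective ![0, 1, 3, 2] (by decide)
noncomputable def pADBC : Pref 4 := Equiv.ofBijective ![0, 2, 3, 1] (by decide)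
noncomputable def pBACD : Pref 4 := Equiv.ofBijective ![1, 0, 2, 3] (by decide)
noncomputable def pBADC : Pref 4 := Equiv.ofBijective ![1, 0, 3, 2] (by decide)
noncomputable def pBDCA : Pref 4 := Equiv.ofBijective ![3, 0, 2, 1] (by decide)
noncomputable def pDBCA : Pref 4 := Equiv.ofBijective ![3, 1, 2, 0] (by decide)

section Work
open Finset

lemma cumA0 (x : Fin 4 → ℝ) : ∑ k ∈ univ.filter (fun k => pABCD k ≤ pABCD 0), x k = x 0 := by
  rw [Finset.sum_filter, Fin.sum_univ_four,
    if_pos (by decide), if_neg (by decide), if_neg (by decide), if_neg (by decide)]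
  ring
lemma cumA1 (x : Fin 4 → ℝ) : ∑ k ∈ univ.filter (fun k => pABCD k ≤ pABCD 1), x k = x 0 + x 1 := by
  rw [Finset.sum_filter, Fin.sum_univ_four,
    if_pos (by decide), if_pos (by decide), if_neg (by decide), if_neg (by decide)]
  ring
lemma cumA2 (x : Fin 4 → ℝ) : ∑ k ∈ univ.filter (fun k => pABCD k ≤ pABCD 2), x k = x 0 + x 1 + x 2 := by
  rw [Finset.sum_filter, Fin.sum_univ_four,
    if_pos (by decide), if_pos (by decide), if_pos (by decide), if_neg (by decide)]
  ring
lemma cumA3 (x : Fin 4 → ℝ) : ∑ k ∈ univ.filter (fun k => pABCD k ≤ pABCD 3), x k = x 0 + x 1 + x 2 + x 3 := by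
  rw [Finset.sum_filter, Fin.sum_univ_four,
    if_pos (by decide), if_pos (by decide), if_pos (by decide), if_pos (by decide)]
lemma cumB0 (x : Fin 4 → ℝ) : ∑ k ∈ univ.filter (fun k => pABDC k ≤ pABDC 0), x k = x 0 := by
  rw [Finset.sum_filter, Fin.sum_univ_four,
    if_pos (by decide), if_neg (by decide), if_neg (by decide), if_neg (by decide)]
  ring
lemma cumB1 (x : Fin 4 → ℝ) : ∑ k ∈ univ.filter (fun k => pABDC k ≤ pABDC 1), x k = x 0 + x 1 := by
  rw [Finset.sum_filter, Fin.sum_univ_four,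
    if_pos (by decide), if_pos (by decide), if_neg (by decide), if_neg (by decide)]
  ring
lemma cumB2 (x : Fin 4 → ℝ) : ∑ k ∈ univ.filter (fun k => pABDC k ≤ pABDC 2), x k = x 0 + x 1 + x 2 + x 3 := by
  rw [Finset.sum_filter, Fin.sum_univ_four,
    if_pos (by decide), if_pos (by decide), if_pos (by decide), if_pos (by decide)]
lemma cumB3 (x : Fin 4 → ℝ) : ∑ k ∈ univ.filter (fun k => pABDC k ≤ pABDC 3), x k = x 0 + x 1 + x 3 := by
  rw [Finset.sum_filter, Fin.sum_univ_four,
    if_pos (by decide), if_pos (by decide), if_neg (by decide), if_pos (by decide)]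
  ring

lemma cumA (x : Fin 4 → ℝ) (j : Fin 4) :
    ∑ k ∈ univ.filter (fun k => pABCD k ≤ pABCD j), x k =
      if j = 0 then x 0 else if j = 1 then x 0 + x 1
        else if j = 2 then x 0 + x 1 + x 2 else x 0 + x 1 + x 2 + x 3 := by
  fin_cases j
  · exact cumA0 x
  · exact cumA1 x
  · exact cumA2 x
  · exact cumA3 x

lemma cumB (x : Fin 4 → ℝ) (j : Fin 4) :
    ∑ k ∈ univ.filter (fun k => pABDC k ≤ pABDC j), x k =
      if j = 0 then x 0 else if j = 1 then x 0 + x 1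
        else if j = 2 then x 0 + x 1 + x 2 + x 3 else x 0 + x 1 + x 3 := by
  fin_cases j
  · exact cumB0 x
  · exact cumB1 x
  · exact cumB2 x
  · exact cumB3 x


theorem profile_II (φ : Mechanism 4)
    (hV : ValidMech φ) (hUI : UpperInvariant φ) (hOE : OrdEff φ) (hS : SymmetricMech φ) :
    ∀ i : Fin 4,
      φ (fun k => if k = 3 then pABDC else pABCD) i =
        if i = 3 then ![1 / 4, 1 / 4, 0, 1 / 2]
        else ![1 / 4, 1 / 4, 1 / 3, 1 / 6] := by
  classical
  set P0 : Fin 4 → Pref 4 := fun _ => pABCD with hP0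
  set P : Fin 4 → Pref 4 := fun k => if k = 3 then pABDC else pABCD with hP
  have hsym0 : ∀ i, φ P0 i = φ P0 0 := fun i => hS P0 i 0 rfl
  have hdiv : ∀ i j, φ P0 i j = 1/4 := by
    intro i j
    have hcol := (hV P0).2.2 j
    rw [Fin.sum_univ_four] at hcol
    have h1 := congrFun (hsym0 1) j
    have h2 := congrFun (hsym0 2) j
    have h3 := congrFun (hsym0 3) j
    have hi := congrFun (hsym0 i) j
    linarith
  have hswap : AdjSwap (P0 3) pABDC 2 3 := by
    refine ⟨rfl, ?_⟩
    ext k; fin_cases k <;> rfl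
  have hupd : Function.update P0 3 pABDC = P := by
    funext k
    rcases eq_or_ne k 3 with h | h
    · subst h; simp [Function.update, hP]
    · simp [Function.update, h, hP, hP0]
  have h30 : φ P 3 0 = 1/4 := by
    have h := hUI P0 3 2 3 pABDC hswap 0 (by decide)
    rw [hupd] at h
    rw [h]; exact hdiv 3 0
  have h31 : φ P 3 1 = 1/4 := by
    have h := hUI P0 3 2 3 pABDC hswap 1 (by decide)
    rw [hupd] at h
    rw [h]; exact hdiv 3 1
  have hs1 : φ P 1 = φ P 0 := hS P 1 0 rfl
  have hs2 : φ P 2 = φ P 0 := hS P 2 0 rfl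
  have hcol : ∀ j, φ P 0 j + φ P 1 j + φ P 2 j + φ P 3 j = 1 := by
    intro j; have := (hV P).2.2 j; rw [Fin.sum_univ_four] at this; linarith
  have hrow3 : φ P 3 0 + φ P 3 1 + φ P 3 2 + φ P 3 3 = 1 := by
    have := (hV P).2.1 3; rw [Fin.sum_univ_four] at this; linarith
  have h00 : φ P 0 0 = 1/4 := by
    have := hcol 0; rw [congrFun hs1 0, congrFun hs2 0, h30] at this; linarith
  have h01 : φ P 0 1 = 1/4 := by
    have := hcol 1; rw [congrFun hs1 1, congrFun hs2 1, h31] at this; linarith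
  have h02 : φ P 0 2 = (1 - φ P 3 2) / 3 := by
    have := hcol 2; rw [congrFun hs1 2, congrFun hs2 2] at this; linarith
  have h33 : φ P 3 3 = 1/2 - φ P 3 2 := by linarith [hrow3]
  have h03 : φ P 0 3 = (1/2 + φ P 3 2) / 3 := by
    have := hcol 3; rw [congrFun hs1 3, congrFun hs2 3, h33] at this; linarith
  have ht0 : 0 ≤ φ P 3 2 := (hV P).1 3 2
  have ht : φ P 3 2 = 0 := by
    by_contra hne
    have ht : 0 < φ P 3 2 := lt_of_le_of_ne ht0 (Ne.symm hne)
    have hthalf : φ P 3 2 ≤ 1/2 := by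
      have := (hV P).1 3 3; linarith [h33]
    refine hOE P ⟨fun i j => if i = 3 then ![(1:ℝ)/4, 1/4, 0, 1/2] j
        else ![(1:ℝ)/4, 1/4, 1/3, 1/6] j, ⟨?_, ?_, ?_⟩, ?_, 3, 3, ?_⟩
    · intro i j
      rcases eq_or_ne i 3 with h | h <;> simp [h] <;> fin_cases j <;> norm_num
    · intro i
      rw [Fin.sum_univ_four]
      rcases eq_or_ne i 3 with h | h <;> simp [h] <;> norm_num
    · intro j
      rw [Fin.sum_univ_four]
      have e0 : ((0 : Fin 4) = 3) = False := by simp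
      have e1 : ((1 : Fin 4) = 3) = False := by simp
      have e2 : ((2 : Fin 4) = 3) = False := by simp
      simp only [e0, e1, e2, if_false, if_pos rfl, ite_true]
      fin_cases j <;> norm_num
    · intro i j
      rcases eq_or_ne i 3 with h | h
      · subst h
        have hPi : P 3 = pABDC := rfl
        rw [hPi, cumB, cumB]
        fin_cases j <;> simp <;> linarith [h30, h31, h33, ht, ht0, hthalf]
      · have hPi : P i = pABCD := by rw [hP]; simp [h]
        have hφi : φ P i = φ P 0 := by
          have : i = 0 ∨ i = 1 ∨ i = 2 := by omega
          rcases this with h' | h' | h' <;> subst h'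
          · rfl
          · exact hs1
          · exact hs2
        have hy : ∀ k : Fin 4, (fun (i j : Fin 4) => if i = 3 then ![(1:ℝ)/4, 1/4, 0, 1/2] j
            else ![(1:ℝ)/4, 1/4, 1/3, 1/6] j) i k = ![(1:ℝ)/4, 1/4, 1/3, 1/6] k := by
          intro k; simp [h]
        rw [hPi, hφi]
        simp only [hy]
        rw [cumA, cumA]
        fin_cases j <;> simp <;> linarith [h00, h01, h02, h03, ht, ht0, hthalf]
    · have hPi : P 3 = pABDC := rfl
      rw [hPi, cumB, cumB]
      simp only [if_neg (by decide : ¬((3:Fin 4) = 0)), if_neg (by decide : ¬((3:Fin 4) = 1)),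
        if_neg (by decide : ¬((3:Fin 4) = 2))]
      simp
      rw [h30, h31, h33]
      norm_num
      linarith [h30, h31, h33, ht]
  intro i
  have h33' : φ P 3 3 = 1/2 := by rw [h33, ht]; norm_num
  have h02' : φ P 0 2 = 1/3 := by rw [h02, ht]; norm_num
  have h03' : φ P 0 3 = 1/6 := by rw [h03, ht]; norm_num
  fin_cases i
  · rw [if_neg (by decide)]; funext j; fin_cases j
    · show φ P 0 0 = (1/4:ℝ); exact h00
    · show φ P 0 1 = (1/4:ℝ); exact h01
    · show φ P 0 2 = (1/3:ℝ); exact h02'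
    · show φ P 0 3 = (1/6:ℝ); exact h03'
  · rw [if_neg (by decide)]; funext j; fin_cases j
    · show φ P 1 0 = (1/4:ℝ); rw [congrFun hs1 0]; exact h00
    · show φ P 1 1 = (1/4:ℝ); rw [congrFun hs1 1]; exact h01
    · show φ P 1 2 = (1/3:ℝ); rw [congrFun hs1 2]; exact h02'
    · show φ P 1 3 = (1/6:ℝ); rw [congrFun hs1 3]; exact h03'
  · rw [if_neg (by decide)]; funext j; fin_cases j
    · show φ P 2 0 = (1/4:ℝ); rw [congrFun hs2 0]; exact h00
    · show φ P 2 1 = (1/4:ℝ); rw [congrFun hs2 1]; exact h01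
    · show φ P 2 2 = (1/3:ℝ); rw [congrFun hs2 2]; exact h02'
    · show φ P 2 3 = (1/6:ℝ); rw [congrFun hs2 3]; exact h03'
  · show φ P 3 = ![1 / 4, 1 / 4, 0, 1 / 2]
    funext j; fin_cases j
    · show φ P 3 0 = (1/4:ℝ); exact h30
    · show φ P 3 1 = (1/4:ℝ); exact h31
    · show φ P 3 2 = (0:ℝ); exact ht
    · show φ P 3 3 = (1/2:ℝ); exact h33'

end Work
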